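/- arXiv:2006.05660 — 5 statements merged into one kernel-verified Lean document; each statement's English description precedes it below -/
import Mathlib

section
/- Let Λ be a lattice of rank n in E, let Λ' ⊆ Λ be a pure sublattice, and let π be the orthogonal projection of E onto the orthogonal complement of span(Λ'). Let t ∈ span(Λ). Suppose v ∈ Λ is such that π(v) is a closest point to π(t) in the quotient lattice π(Λ), and let w = v + w' where w' ∈ Λ' is a closest point of Λ' to the orthogonal projection of t − v onto span(Λ'). Then ‖t − w‖² ≤ μ(π(Λ))² + μ(Λ')². -/
open scoped RealInnerProductSpace
open Metric

noncomputable section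

variable {E : Type*} [NormedAddCommGroup E] [InnerProductSpace ℝ E] [FiniteDimensional ℝ E]

/-- `L ⊆ E` is a lattice of rank `n`: it is generated (over `ℤ`) by `n`
`ℝ`-linearly independent vectors. -/
def IsLatticeOfRank (L : Submodule ℤ E) (n : ℕ) : Prop :=
  ∃ b : Fin n → E, LinearIndependent ℝ b ∧ L = Submodule.span ℤ (Set.range b)

/-- The real span of a lattice. -/
def latSpan (L : Submodule ℤ E) : Submodule ℝ E := Submodule.span ℝ (L : Set E)

/-- The covering radius of a lattice, computed inside its real span. -/
def covRad (L : Submodule ℤ E) : ℝ :=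
  ⨆ x : latSpan L, infDist (x : E) (L : Set E)

/-- `L'` is a pure sublattice of `L`: the quotient is torsion-free. -/
def IsPureIn (L' L : Submodule ℤ E) : Prop :=
  L' ≤ L ∧ ∀ v ∈ L, ∀ m : ℤ, m ≠ 0 → m • v ∈ L' → v ∈ L'

/-- Orthogonal projection of `E` onto the orthogonal complement of the span
of `L'`, as a `ℤ`-linear endomorphism of `E`. -/
def projPerp (L' : Submodule ℤ E) : E →ₗ[ℤ] E :=
  ((latSpan L')ᗮ.subtype.comp (Submodule.orthogonalProjectionOnto (latSpan L')ᗮ).toLinearMap).restrictScalars ℤ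

/-- The quotient lattice `L/L'`, realized as the image of `L` under the
orthogonal projection onto the orthogonal complement of the span of `L'`. -/
def quotLat (L L' : Submodule ℤ E) : Submodule ℤ E := L.map (projPerp L')

omit [FiniteDimensional ℝ E] in
lemma aux_infDist_le_sum (S : Finset E) (L : Submodule ℤ E)
    (hL : L = Submodule.span ℤ (S : Set E)) (x : E) (hx : x ∈ latSpan L) :
    infDist x (L : Set E) ≤ ∑ i ∈ S, ‖i‖ := by
  have hspan : latSpan L = Submodule.span ℝ (S : Set E) := by
    rw [latSpan, hL, Submodule.span_span_of_tower]
  rw [hspan] at hx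
  obtain ⟨f, -, hf⟩ := Submodule.mem_span_finset.mp hx
  set z : E := ∑ i ∈ S, (⌊f i⌋ : ℤ) • i with hz
  have hzL : z ∈ L := by
    rw [hL]
    exact Submodule.sum_smul_mem _ _ (fun i hi => Submodule.subset_span hi)
  have hxz : x - z = ∑ i ∈ S, Int.fract (f i) • i := by
    rw [← hf, hz, ← Finset.sum_sub_distrib]
    refine Finset.sum_congr rfl fun i _ => ?_
    rw [Int.fract, sub_smul, Int.cast_smul_eq_zsmul]
  have hnorm : ‖x - z‖ ≤ ∑ i ∈ S, ‖i‖ := by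
    rw [hxz]
    refine (norm_sum_le _ _).trans (Finset.sum_le_sum fun i _ => ?_)
    rw [norm_smul]
    have h1 : ‖Int.fract (f i)‖ ≤ 1 := by
      rw [Real.norm_eq_abs, abs_of_nonneg (Int.fract_nonneg _)]
      exact (Int.fract_lt_one _).le
    calc ‖Int.fract (f i)‖ * ‖i‖ ≤ 1 * ‖i‖ :=
          mul_le_mul_of_nonneg_right h1 (norm_nonneg _)
      _ = ‖i‖ := one_mul _
  calc infDist x (L : Set E) ≤ dist x z := infDist_le_dist_of_mem hzL
    _ = ‖x - z‖ := dist_eq_norm _ _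
    _ ≤ _ := hnorm

omit [FiniteDimensional ℝ E] in
lemma aux_infDist_le_covRad (L : Submodule ℤ E) (C : ℝ)
    (hC : ∀ y ∈ latSpan L, infDist y (L : Set E) ≤ C)
    (x : E) (hx : x ∈ latSpan L) : infDist x (L : Set E) ≤ covRad L := by
  have hbdd : BddAbove (Set.range fun y : latSpan L => infDist (y : E) (L : Set E)) := by
    refine ⟨C, ?_⟩
    rintro r ⟨y, rfl⟩
    exact hC y y.2
  exact le_ciSup hbdd (⟨x, hx⟩ : latSpan L)

/-- Let Λ be a lattice of rank n, Λ' ⊆ Λ a pure sublattice, π the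
orthogonal projection onto the orthocomplement of span(Λ'), t ∈ span(Λ).
If v ∈ Λ is such that π(v) is closest to π(t) in π(Λ), and w = v + w' where
w' ∈ Λ' is a closest point of Λ' to the orthogonal projection of t − v onto
span(Λ'), then ‖t − w‖² ≤ μ(π(Λ))² + μ(Λ')². -/
theorem nearest_colattice_step_bound
    {E : Type*} [NormedAddCommGroup E] [InnerProductSpace ℝ E] [FiniteDimensional ℝ E]
    (n : ℕ) (L L' : Submodule ℤ E) (hL : IsLatticeOfRank L n) (hpure : IsPureIn L' L)
    (t : E) (ht : t ∈ latSpan L)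
    (v : E) (hv : v ∈ L)
    (hvclose : ‖projPerp L' t - projPerp L' v‖
        = infDist (projPerp L' t) ((quotLat L L' : Submodule ℤ E) : Set E))
    (w' : E) (hw'mem : w' ∈ L')
    (hw'close : ‖(Submodule.orthogonalProjectionOnto (latSpan L') (t - v) : E) - w'‖
        = infDist ((Submodule.orthogonalProjectionOnto (latSpan L') (t - v) : E)) (L' : Set E))
    (w : E) (hw : w = v + w') :
    ‖t - w‖ ^ 2 ≤ covRad (quotLat L L') ^ 2 + covRad L' ^ 2 := by
  classical
  obtain ⟨g, hgind, hgspan⟩ := hL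
  set a : E := (Submodule.orthogonalProjectionOnto (latSpan L') (t - v) : E) - w' with ha
  set b : E := projPerp L' (t - v) with hb
  -- decomposition
  have hb' : b = (Submodule.orthogonalProjectionOnto (latSpan L')ᗮ (t - v) : E) := rfl
  have hdecomp : t - w = a + b := by
    have h1 : (Submodule.orthogonalProjectionOnto (latSpan L') (t - v) : E)
        + (Submodule.orthogonalProjectionOnto (latSpan L')ᗮ (t - v) : E) = t - v :=
      by simpa only [Submodule.starProjection_apply] using
          Submodule.starProjection_add_starProjection_orthogonal (K := latSpan L') (t - v)
    have h2 : t - w = ((Submodule.orthogonalProjectionOnto (latSpan L') (t - v) : E)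
        + (Submodule.orthogonalProjectionOnto (latSpan L')ᗮ (t - v) : E)) - w' := by
      rw [h1, hw]; abel
    rw [h2, ha, hb']; abel
  -- orthogonality
  have haK : a ∈ latSpan L' :=
    Submodule.sub_mem _ (Submodule.orthogonalProjectionOnto (latSpan L') (t - v)).2
      (Submodule.subset_span hw'mem)
  have hbK : b ∈ (latSpan L')ᗮ := by
    rw [hb']; exact (Submodule.orthogonalProjectionOnto (latSpan L')ᗮ (t - v)).2
  have hinner : ⟪a, b⟫ = 0 := Submodule.inner_right_of_mem_orthogonal haK hbK
  have hpyth : ‖t - w‖ ^ 2 = ‖a‖ ^ 2 + ‖b‖ ^ 2 := by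
    rw [hdecomp, norm_add_sq_real, hinner]; ring
  -- L' is finitely generated
  have hLfg : L.FG := by rw [hgspan]; exact Submodule.fg_span (Set.finite_range g)
  haveI : IsNoetherian ℤ L := isNoetherian_of_fg_of_noetherian L hLfg
  have hL'fg : L'.FG := by
    have h1 : (Submodule.comap L.subtype L').FG := IsNoetherian.noetherian _
    have h2 : Submodule.map L.subtype (Submodule.comap L.subtype L') = L' := by
      rw [Submodule.map_comap_subtype]
      exact inf_eq_right.mpr hpure.1
    rw [← h2]; exact h1.map _
  obtain ⟨S, hSspan⟩ := hL'fg
  -- bound on a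
  have hcov1 : infDist ((Submodule.orthogonalProjectionOnto (latSpan L') (t - v) : E)) (L' : Set E)
      ≤ covRad L' :=
    aux_infDist_le_covRad L' _
      (fun x hx => aux_infDist_le_sum S L' hSspan.symm x hx) _
      (Submodule.orthogonalProjectionOnto (latSpan L') (t - v)).2
  have hna : ‖a‖ ≤ covRad L' := by rw [ha, hw'close]; exact hcov1
  -- quotLat is spanned by a finite set
  have hT : quotLat L L'
      = Submodule.span ℤ ((Finset.image (fun i => projPerp L' (g i)) Finset.univ : Finset E)
          : Set E) := by
    rw [quotLat, hgspan, Submodule.map_span]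
    congr 1
    ext x
    simp
  -- membership of projPerp L' t in the span of the quotient lattice
  have htq : projPerp L' t ∈ latSpan (quotLat L L') := by
    have hset : ((quotLat L L' : Submodule ℤ E) : Set E)
        = ⇑((latSpan L')ᗮ.subtype.comp (Submodule.orthogonalProjectionOnto (latSpan L')ᗮ).toLinearMap)
            '' (L : Set E) := rfl
    have hls : latSpan (quotLat L L')
        = Submodule.map ((latSpan L')ᗮ.subtype.comp
            (Submodule.orthogonalProjectionOnto (latSpan L')ᗮ).toLinearMap) (latSpan L) := by
      rw [latSpan, hset, latSpan, Submodule.span_image]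
      rfl
    rw [hls]
    exact ⟨t, ht, rfl⟩
  have hcov2 : infDist (projPerp L' t) ((quotLat L L' : Submodule ℤ E) : Set E)
      ≤ covRad (quotLat L L') :=
    aux_infDist_le_covRad _ _
      (fun x hx => aux_infDist_le_sum _ _ hT x hx) _ htq
  have hnb : ‖b‖ ≤ covRad (quotLat L L') := by
    have hbeq : b = projPerp L' t - projPerp L' v := by rw [hb, map_sub]
    rw [hbeq, hvclose]; exact hcov2
  have h1 : ‖a‖ ^ 2 ≤ covRad L' ^ 2 := pow_le_pow_left₀ (norm_nonneg a) hna 2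
  have h2 : ‖b‖ ^ 2 ≤ covRad (quotLat L L') ^ 2 := pow_le_pow_left₀ (norm_nonneg b) hnb 2
  linarith [hpyth]


end
end

section
/- Let Λ be a lattice of rank n in E, let Λ' ⊆ Λ be a pure sublattice, and let π be the orthogonal projection of E onto the orthogonal complement of span(Λ'). Then the covering radius satisfies the subadditivity bound μ(Λ)² ≤ μ(π(Λ))² + μ(Λ')². -/
open scoped RealInnerProductSpace
open Metric

noncomputable section

variable {E : Type*} [NormedAddCommGroup E] [InnerProductSpace ℝ E] [FiniteDimensional ℝ E]

/-- Any point of the real span of a lattice generated by `v` lies within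
`∑ ‖v i‖` of the lattice. -/
lemma infDist_le_sum_norm (M : Submodule ℤ E) {k : ℕ} (v : Fin k → E)
    (hM : M = Submodule.span ℤ (Set.range v)) {x : E} (hx : x ∈ latSpan M) :
    infDist x (M : Set E) ≤ ∑ i, ‖v i‖ := by
  have hspan : latSpan M = Submodule.span ℝ (Set.range v) := by
    rw [latSpan, hM, Submodule.span_span_of_tower]
  rw [hspan] at hx
  obtain ⟨c, hc⟩ := (Submodule.mem_span_range_iff_exists_fun ℝ).1 hx
  set y : E := ∑ i, (⌊c i⌋ : ℤ) • v i with hy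
  have hyM : y ∈ M := by
    rw [hM]
    exact Submodule.sum_mem _ fun i _ =>
      Submodule.smul_mem _ _ (Submodule.subset_span ⟨i, rfl⟩)
  refine (infDist_le_dist_of_mem hyM).trans ?_
  rw [dist_eq_norm, ← hc]
  have hdiff : (∑ i, c i • v i) - y = ∑ i, Int.fract (c i) • v i := by
    rw [hy, ← Finset.sum_sub_distrib]
    refine Finset.sum_congr rfl fun i _ => ?_
    rw [← Int.cast_smul_eq_zsmul ℝ, ← sub_smul, Int.fract]
  rw [hdiff]
  refine (norm_sum_le _ _).trans (Finset.sum_le_sum fun i _ => ?_)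
  rw [norm_smul, Real.norm_eq_abs, abs_of_nonneg (Int.fract_nonneg _)]
  exact mul_le_of_le_one_left (norm_nonneg _) (le_of_lt (Int.fract_lt_one _))

lemma bddAbove_infDist (M : Submodule ℤ E) {k : ℕ} (v : Fin k → E)
    (hM : M = Submodule.span ℤ (Set.range v)) :
    BddAbove (Set.range fun x : latSpan M => infDist (x : E) (M : Set E)) := by
  refine ⟨∑ i, ‖v i‖, ?_⟩
  rintro _ ⟨x, rfl⟩
  exact infDist_le_sum_norm M v hM x.2

lemma covRad_nonneg (M : Submodule ℤ E) : 0 ≤ covRad M :=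
  Real.iSup_nonneg fun _ => infDist_nonneg

/-- Let Λ be a lattice of rank n, Λ' ⊆ Λ a pure sublattice, and π
the orthogonal projection of E onto the orthogonal complement of span(Λ').
Then μ(Λ)² ≤ μ(π(Λ))² + μ(Λ')² (subadditivity of the covering radius). -/
theorem covRad_sq_subadditive
    {E : Type*} [NormedAddCommGroup E] [InnerProductSpace ℝ E] [FiniteDimensional ℝ E]
    (n : ℕ) (L L' : Submodule ℤ E) (hL : IsLatticeOfRank L n) (hpure : IsPureIn L' L) :
    covRad L ^ 2 ≤ covRad (quotLat L L') ^ 2 + covRad L' ^ 2 := by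
  obtain ⟨b, -, hLspan⟩ := hL
  obtain ⟨hle, -⟩ := hpure
  set K : Submodule ℝ E := latSpan L' with hK
  set πr : E →ₗ[ℝ] E := Kᗮ.subtype.comp (Submodule.orthogonalProjectionOnto Kᗮ).toLinearMap with hπr
  have hπ : ∀ x : E, projPerp L' x = πr x := fun x => rfl
  -- the quotient lattice is generated by the projections of the generators
  have hquot : quotLat L L' = Submodule.span ℤ (Set.range fun i => πr (b i)) := by
    rw [quotLat, hLspan, Submodule.map_span, ← Set.range_comp]
    rfl
  -- L' is finitely generated
  have hLfg : L.FG := by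
    rw [hLspan]; exact Submodule.fg_span (Set.finite_range b)
  have hnoeth : IsNoetherian ℤ L := isNoetherian_of_fg_of_noetherian _ hLfg
  have hfg' : L'.FG := by
    have h1 : (L'.comap L.subtype).FG := IsNoetherian.noetherian _
    have h2 := h1.map L.subtype
    rwa [Submodule.map_comap_subtype, inf_eq_right.mpr hle] at h2
  obtain ⟨m, w, hw⟩ := Submodule.fg_iff_exists_fin_generating_family.1 hfg'
  have hbddq := bddAbove_infDist (quotLat L L') _ hquot
  have hbdd' := bddAbove_infDist L' w hw.symm
  set μq := covRad (quotLat L L') with hμq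
  set μ' := covRad L' with hμ'
  have hμq0 : 0 ≤ μq := covRad_nonneg _
  have hμ'0 : 0 ≤ μ' := covRad_nonneg _
  -- the key pointwise bound
  have key : ∀ x : latSpan L, infDist (x : E) (L : Set E) ≤ Real.sqrt (μq ^ 2 + μ' ^ 2) := by
    intro x
    have hsq : infDist (x : E) (L : Set E) ^ 2 ≤ μq ^ 2 + μ' ^ 2 := by
      refine le_of_forall_pos_le_add fun δ hδ => ?_
      set C : ℝ := 2 * μq + 2 * μ' + 2 with hC
      have hC0 : 0 < C := by positivity
      set ε : ℝ := min 1 (δ / C) with hε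
      have hε0 : 0 < ε := lt_min one_pos (div_pos hδ hC0)
      have hε1 : ε ≤ 1 := min_le_left _ _
      have hεδ : ε * C ≤ δ := by
        rw [← le_div_iff₀ hC0]; exact min_le_right _ _
      -- project x and find a close lattice point in the quotient
      have hxq : πr (x : E) ∈ latSpan (quotLat L L') := by
        have hset : ((quotLat L L' : Submodule ℤ E) : Set E) = πr '' (L : Set E) := by
          rw [quotLat, Submodule.map_coe]; rfl
        rw [latSpan, hset, Submodule.span_image]
        exact Submodule.mem_map_of_mem x.2
      have h1 : infDist (πr (x : E)) (quotLat L L' : Set E) ≤ μq :=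
        le_ciSup hbddq ⟨πr (x : E), hxq⟩
      obtain ⟨p, hp, hpd⟩ := (infDist_lt_iff ⟨0, Submodule.zero_mem _⟩).1
        (h1.trans_lt (lt_add_of_pos_right _ hε0))
      obtain ⟨y, hyL, rfl⟩ := Submodule.mem_map.1 hp
      -- the component of x - y in K, and a close lattice point of L'
      set w0 : E := ↑(Submodule.orthogonalProjectionOnto K ((x : E) - y)) with hw0
      have hw0K : w0 ∈ K := Submodule.coe_mem _
      have h2 : infDist w0 (L' : Set E) ≤ μ' := le_ciSup hbdd' ⟨w0, hw0K⟩
      obtain ⟨z, hzL', hzd⟩ := (infDist_lt_iff ⟨0, Submodule.zero_mem _⟩).1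
        (h2.trans_lt (lt_add_of_pos_right _ hε0))
      have hyz : y + z ∈ L := L.add_mem hyL (hle hzL')
      -- orthogonal decomposition of x - (y + z)
      have hdecomp : (x : E) - (y + z) = (w0 - z) + πr ((x : E) - y) := by
        have h := Submodule.starProjection_add_starProjection_orthogonal (K := K) ((x : E) - y)
        have hπeq : πr ((x : E) - y) = ↑(Submodule.orthogonalProjectionOnto Kᗮ ((x : E) - y)) := rfl
        rw [hπeq]
        have : (x : E) - y = w0 + ↑(Submodule.orthogonalProjectionOnto Kᗮ ((x : E) - y)) := h.symm
        linear_combination (norm := abel) this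
      have hzK : z ∈ K := Submodule.subset_span hzL'
      have hinner : @inner ℝ _ _ (w0 - z) (πr ((x : E) - y)) = 0 :=
        Submodule.inner_right_of_mem_orthogonal (K.sub_mem hw0K hzK)
          (Submodule.coe_mem (Submodule.orthogonalProjectionOnto Kᗮ ((x : E) - y)))
      have hnorm : ‖(x : E) - (y + z)‖ ^ 2 = ‖w0 - z‖ ^ 2 + ‖πr ((x : E) - y)‖ ^ 2 := by
        rw [hdecomp, sq, sq, sq]
        exact norm_add_sq_eq_norm_sq_add_norm_sq_of_inner_eq_zero _ _ hinner
      have hd1 : ‖πr ((x : E) - y)‖ < μq + ε := by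
        have : πr ((x : E) - y) = πr (x : E) - projPerp L' y := by
          rw [map_sub]; rfl
        rw [this, ← dist_eq_norm]
        exact hpd
      have hd2 : ‖w0 - z‖ < μ' + ε := by rw [← dist_eq_norm]; exact hzd
      have hdist : infDist (x : E) (L : Set E) ≤ ‖(x : E) - (y + z)‖ := by
        rw [← dist_eq_norm]
        exact infDist_le_dist_of_mem hyz
      have hfin : infDist (x : E) (L : Set E) ^ 2 ≤ ‖(x : E) - (y + z)‖ ^ 2 :=
        pow_le_pow_left₀ infDist_nonneg hdist 2
      have hb1 : ‖πr ((x : E) - y)‖ ^ 2 ≤ (μq + ε) ^ 2 :=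
        pow_le_pow_left₀ (norm_nonneg _) hd1.le 2
      have hb2 : ‖w0 - z‖ ^ 2 ≤ (μ' + ε) ^ 2 :=
        pow_le_pow_left₀ (norm_nonneg _) hd2.le 2
      nlinarith [hfin, hnorm, hb1, hb2, hεδ, hε1, hε0, hμq0, hμ'0]
    exact Real.le_sqrt_of_sq_le hsq
  have hcov : covRad L ≤ Real.sqrt (μq ^ 2 + μ' ^ 2) :=
    Real.iSup_le key (Real.sqrt_nonneg _)
  calc covRad L ^ 2 ≤ Real.sqrt (μq ^ 2 + μ' ^ 2) ^ 2 :=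
        pow_le_pow_left₀ (covRad_nonneg _) hcov 2
    _ = μq ^ 2 + μ' ^ 2 := Real.sq_sqrt (by positivity)

end
end

section
/- Let (b₁, …, b_n) be a ℤ-basis of a lattice Λ and let (b₁*, …, b_n*) be its Gram–Schmidt orthogonalization. Then for every t ∈ span(Λ) there exists v ∈ Λ with ‖v − t‖² ≤ (1/4)·Σ_{i=1}^n ‖b_i*‖². In particular, for the complete filtration Λ_i = ℤb₁ + ⋯ + ℤb_i, each rank-one quotient Λ_i/Λ_{i−1} has covering radius (1/2)‖b_i*‖, equal to half its covolume. -/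
open scoped RealInnerProductSpace
open Metric

noncomputable section

variable {E : Type*} [NormedAddCommGroup E] [InnerProductSpace ℝ E] [FiniteDimensional ℝ E]

instance finWellFoundedLT (n : ℕ) : WellFoundedLT (Fin n) := inferInstance

/-- The partial lattice ℤb₁ + ⋯ + ℤb_i generated by the first i vectors. -/
def chainOf {E : Type*} [NormedAddCommGroup E] [InnerProductSpace ℝ E]
    {n : ℕ} (b : Fin n → E) (i : ℕ) : Submodule ℤ E :=
  Submodule.span ℤ (b '' {j : Fin n | (j : ℕ) < i})

open InnerProductSpace

-- ### Auxiliary lemmas ###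

lemma latSpan_span' (s : Set E) : latSpan (Submodule.span ℤ s) = Submodule.span ℝ s :=
  Submodule.span_span_of_tower ℤ ℝ s

lemma norm_eq_of_span_eq {g g' : E} (hg' : g' ≠ 0)
    (h : Submodule.span ℤ {g} = Submodule.span ℤ {g'}) : ‖g‖ = ‖g'‖ := by
  have h1 : g ∈ Submodule.span ℤ ({g'} : Set E) := h ▸ Submodule.mem_span_singleton_self g
  have h2 : g' ∈ Submodule.span ℤ ({g} : Set E) := h ▸ Submodule.mem_span_singleton_self g'
  obtain ⟨a, ha⟩ := Submodule.mem_span_singleton.1 h1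
  obtain ⟨c, hc⟩ := Submodule.mem_span_singleton.1 h2
  have key : (c * a) • g' = (1 : ℤ) • g' := by rw [mul_smul, ha, hc, one_smul]
  have hac : c * a = 1 := by
    by_contra hne
    have h3 := sub_eq_zero.2 key
    rw [← sub_smul, ← Int.cast_smul_eq_zsmul ℝ] at h3
    rcases smul_eq_zero.1 h3 with h0 | h0
    · rw [Int.cast_eq_zero] at h0; exact hne (by omega)
    · exact hg' h0
  rcases Int.mul_eq_one_iff_eq_one_or_neg_one.1 hac with ⟨_, ha1⟩ | ⟨_, ha1⟩ <;>
    subst ha1 <;> rw [← ha] <;> simp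

lemma covRad_span_singleton {g : E} (hg : g ≠ 0) :
    covRad (Submodule.span ℤ ({g} : Set E)) = (1 / 2 : ℝ) * ‖g‖ := by
  have hspan : latSpan (Submodule.span ℤ ({g} : Set E)) = Submodule.span ℝ {g} :=
    latSpan_span' {g}
  have hub : ∀ x : latSpan (Submodule.span ℤ ({g} : Set E)),
      infDist (x : E) (Submodule.span ℤ ({g} : Set E) : Set E) ≤ (1 / 2) * ‖g‖ := by
    rintro ⟨x, hx⟩
    rw [hspan] at hx
    obtain ⟨r, hr⟩ := Submodule.mem_span_singleton.1 hx
    have hmem : (round r : ℤ) • g ∈ (Submodule.span ℤ ({g} : Set E) : Set E) :=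
      Submodule.smul_mem _ _ (Submodule.mem_span_singleton_self g)
    refine le_trans (infDist_le_dist_of_mem hmem) ?_
    rw [dist_eq_norm]
    simp only [← hr]
    rw [← Int.cast_smul_eq_zsmul ℝ, ← sub_smul, norm_smul]
    apply mul_le_mul_of_nonneg_right _ (norm_nonneg g)
    rw [Real.norm_eq_abs]
    exact abs_sub_round r
  apply le_antisymm
  · exact ciSup_le hub
  · have hx : ((1:ℝ)/2) • g ∈ latSpan (Submodule.span ℤ ({g} : Set E)) := by
      rw [hspan]
      exact Submodule.smul_mem _ _ (Submodule.mem_span_singleton_self g)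
    have hbdd : BddAbove (Set.range fun x : latSpan (Submodule.span ℤ ({g} : Set E)) =>
        infDist (x : E) (Submodule.span ℤ ({g} : Set E) : Set E)) :=
      ⟨(1/2) * ‖g‖, by rintro _ ⟨x, rfl⟩; exact hub x⟩
    refine le_trans ?_ (le_ciSup hbdd ⟨_, hx⟩)
    rw [infDist_eq_iInf]
    apply le_ciInf
    rintro ⟨y, hy⟩
    obtain ⟨m, hm⟩ := Submodule.mem_span_singleton.1 hy
    simp only [dist_eq_norm, ← hm, Int.cast_smul_eq_zsmul ℝ]
    rw [← Int.cast_smul_eq_zsmul ℝ, ← sub_smul, norm_smul, Real.norm_eq_abs]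
    apply mul_le_mul_of_nonneg_right _ (norm_nonneg g)
    rcases le_or_gt (m:ℝ) 0 with h | h
    · rw [abs_of_nonneg (by linarith)]; linarith
    · have : (1:ℝ) ≤ m := by exact_mod_cast h
      rw [abs_of_nonpos (by linarith)]; linarith

section quot
variable {n : ℕ} (b : Fin n → E) (i : Fin n)

lemma set_eq_Iio : {j : Fin n | (j : ℕ) < (i : ℕ)} = Set.Iio i := by
  rfl

lemma gs_sub_mem : b i - gramSchmidt ℝ b i ∈
    Submodule.span ℝ (gramSchmidt ℝ b '' Set.Iio i) := by
  have h := gramSchmidt_def ℝ b i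
  have : b i - gramSchmidt ℝ b i
      = ∑ j ∈ Finset.Iio i, (ℝ ∙ gramSchmidt ℝ b j).starProjection (b i) := by
    rw [h]; abel
  rw [this]
  apply Submodule.sum_mem
  intro j hj
  have hj' : j < i := Finset.mem_Iio.1 hj
  have h1 : (ℝ ∙ gramSchmidt ℝ b j).starProjection (b i) ∈
      (ℝ ∙ gramSchmidt ℝ b j) := Submodule.starProjection_apply_mem _ _
  refine Submodule.span_mono ?_ h1
  rw [Set.singleton_subset_iff]
  exact Set.mem_image_of_mem _ hj'

lemma gs_mem_orth :
    gramSchmidt ℝ b i ∈ (Submodule.span ℝ (gramSchmidt ℝ b '' Set.Iio i))ᗮ := by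
  have hle : Submodule.span ℝ (gramSchmidt ℝ b '' Set.Iio i) ≤ (ℝ ∙ gramSchmidt ℝ b i)ᗮ := by
    rw [Submodule.span_le]
    rintro _ ⟨j, hj, rfl⟩
    rw [SetLike.mem_coe, Submodule.mem_orthogonal_singleton_iff_inner_right]
    exact gramSchmidt_orthogonal ℝ b (ne_of_gt (Set.mem_Iio.1 hj))
  exact (Submodule.orthogonal_le hle) ((ℝ ∙ gramSchmidt ℝ b i).le_orthogonal_orthogonal
    (Submodule.mem_span_singleton_self _))

lemma latSpan_chain : latSpan (chainOf b (i : ℕ))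
    = Submodule.span ℝ (gramSchmidt ℝ b '' Set.Iio i) := by
  rw [chainOf, latSpan_span', set_eq_Iio]
  exact (span_gramSchmidt_Iio ℝ b i).symm

lemma projPerp_eq (L' : Submodule ℤ E) (x : E) :
    projPerp L' x = (Submodule.orthogonalProjectionOnto (latSpan L')ᗮ x : E) := rfl

lemma projPerp_chain_of_mem_span (x : E)
    (hx : x ∈ Submodule.span ℝ (gramSchmidt ℝ b '' Set.Iio i)) :
    projPerp (chainOf b (i : ℕ)) x = 0 := by
  rw [projPerp_eq, latSpan_chain]
  have : x ∈ ((Submodule.span ℝ (gramSchmidt ℝ b '' Set.Iio i))ᗮ)ᗮ :=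
    (Submodule.span ℝ (gramSchmidt ℝ b '' Set.Iio i)).le_orthogonal_orthogonal hx
  rw [Submodule.orthogonalProjectionOnto_apply_of_mem_orthogonal this]
  simp

lemma projPerp_chain_of_mem_orth (x : E)
    (hx : x ∈ (Submodule.span ℝ (gramSchmidt ℝ b '' Set.Iio i))ᗮ) :
    projPerp (chainOf b (i : ℕ)) x = x := by
  rw [projPerp_eq, latSpan_chain]
  exact congrArg Subtype.val (Submodule.orthogonalProjectionOnto_mem_subspace_eq_self
    (⟨x, hx⟩ : (Submodule.span ℝ (gramSchmidt ℝ b '' Set.Iio i))ᗮ))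

lemma projPerp_chain_b : projPerp (chainOf b (i : ℕ)) (b i) = gramSchmidt ℝ b i := by
  have h1 : projPerp (chainOf b (i : ℕ)) (b i - gramSchmidt ℝ b i) = 0 :=
    projPerp_chain_of_mem_span b i _ (gs_sub_mem b i)
  have h2 : projPerp (chainOf b (i : ℕ)) (gramSchmidt ℝ b i) = gramSchmidt ℝ b i :=
    projPerp_chain_of_mem_orth b i _ (gs_mem_orth b i)
  have := map_sub (projPerp (chainOf b (i : ℕ))) (b i) (gramSchmidt ℝ b i)
  rw [h1, h2] at this
  linear_combination (norm := module) -this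

lemma quotLat_chain :
    quotLat (chainOf b ((i : ℕ) + 1)) (chainOf b (i : ℕ))
      = Submodule.span ℤ {gramSchmidt ℝ b i} := by
  rw [quotLat,
    show chainOf b ((i : ℕ) + 1)
      = Submodule.span ℤ (b '' {j : Fin n | (j : ℕ) < (i : ℕ) + 1}) from rfl,
    Submodule.map_span]
  apply le_antisymm
  · rw [Submodule.span_le]
    rintro _ ⟨_, ⟨j, hj, rfl⟩, rfl⟩
    rcases lt_or_eq_of_le (Nat.lt_succ_iff.1 hj) with h | h
    · have : projPerp (chainOf b (i : ℕ)) (b j) = 0 := by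
        apply projPerp_chain_of_mem_span
        rw [span_gramSchmidt_Iio ℝ b i]
        exact Submodule.subset_span ⟨j, h, rfl⟩
      rw [this]; exact Submodule.zero_mem _
    · have : j = i := Fin.ext h
      subst this
      rw [projPerp_chain_b]
      exact Submodule.subset_span rfl
  · rw [Submodule.span_le, Set.singleton_subset_iff]
    refine Submodule.subset_span ⟨b i, Set.mem_image_of_mem _ (by simp), projPerp_chain_b b i⟩
end quot

lemma babai_aux {n : ℕ} (b : Fin n → E) (k : ℕ) :
    ∀ t ∈ Submodule.span ℝ (b '' {j : Fin n | (j : ℕ) < k}),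
      ∃ v ∈ Submodule.span ℤ (b '' {j : Fin n | (j : ℕ) < k}),
        ‖v - t‖ ^ 2 ≤ (1 / 4 : ℝ) *
          ∑ j ∈ Finset.univ.filter (fun j : Fin n => (j : ℕ) < k),
            ‖gramSchmidt ℝ b j‖ ^ 2 := by
  induction k with
  | zero =>
    intro t ht
    have hset : {j : Fin n | (j : ℕ) < 0} = (∅ : Set (Fin n)) := by
      ext j; simp
    rw [hset] at ht
    simp only [Set.image_empty, Submodule.span_empty, Submodule.mem_bot] at ht
    subst ht
    refine ⟨0, Submodule.zero_mem _, ?_⟩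
    simp only [sub_zero, norm_zero]
    rw [zero_pow (by norm_num)]
    positivity
  | succ k IH =>
    intro t ht
    rcases le_or_gt n k with hk | hk
    · have hset : {j : Fin n | (j : ℕ) < k + 1} = {j : Fin n | (j : ℕ) < k} := by
        ext j; have := j.isLt; simp only [Set.mem_setOf_eq]; omega
      have hfil : (Finset.univ.filter fun j : Fin n => (j : ℕ) < k + 1)
          = Finset.univ.filter fun j : Fin n => (j : ℕ) < k := by
        ext j; have := j.isLt; simp only [Finset.mem_filter, Finset.mem_univ, true_and]; omega
      rw [hset] at ht ⊢
      rw [hfil]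
      exact IH t ht
    · set i : Fin n := ⟨k, hk⟩ with hi
      set g : E := gramSchmidt ℝ b i with hgdef
      set K : Submodule ℝ E := Submodule.span ℝ (gramSchmidt ℝ b '' Set.Iio i) with hK
      have hKb : K = Submodule.span ℝ (b '' {j : Fin n | (j : ℕ) < k}) := by
        rw [hK, span_gramSchmidt_Iio ℝ b i]; rfl
      have horth : ∀ x ∈ K, ⟪x, g⟫ = 0 := by
        intro x hx
        have := (Submodule.mem_orthogonal K g).1 (gs_mem_orth b i)
        exact this x hx
      have hset1 : {j : Fin n | (j : ℕ) < k + 1} = Set.Iic i := by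
        ext j; simp only [Set.mem_setOf_eq, Set.mem_Iic, Fin.le_def]; have : (i : ℕ) = k := rfl; omega
      have ht' : t ∈ Submodule.span ℝ (gramSchmidt ℝ b '' Set.Iic i) := by
        rw [span_gramSchmidt_Iic ℝ b i, ← hset1]; exact ht
      have hIic : Set.Iic i = insert i (Set.Iio i) := by rw [Set.Iio_insert]
      rw [hIic, Set.image_insert_eq, ← hgdef] at ht'
      obtain ⟨r, y, hy, hty⟩ := Submodule.mem_span_insert.1 ht'
      have hw : b i - g ∈ K := gs_sub_mem b i
      set m : ℤ := round r with hm
      set s : E := y - (m : ℝ) • (b i - g) with hs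
      have hsK : s ∈ K := Submodule.sub_mem _ hy (Submodule.smul_mem _ _ hw)
      have hsK' : s ∈ Submodule.span ℝ (b '' {j : Fin n | (j : ℕ) < k}) := hKb ▸ hsK
      obtain ⟨v₀, hv₀, hv₀bd⟩ := IH s hsK'
      refine ⟨v₀ + m • b i, ?_, ?_⟩
      · apply Submodule.add_mem
        · refine Submodule.span_mono (Set.image_mono ?_) hv₀
          intro j hj; exact Nat.lt_succ_of_lt hj
        · exact Submodule.smul_mem _ _ (Submodule.subset_span
            (Set.mem_image_of_mem _ (by simp [hi])))
      · have hv₀K : v₀ ∈ K := by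
          rw [hKb]
          exact Submodule.span_subset_span ℤ ℝ _ hv₀
        have heq : v₀ + m • b i - t = (v₀ - s) + ((m : ℝ) - r) • g := by
          rw [hty, hs, ← Int.cast_smul_eq_zsmul ℝ m (b i)]
          module
        have hinner : ⟪v₀ - s, ((m : ℝ) - r) • g⟫ = 0 := by
          rw [real_inner_smul_right, horth (v₀ - s) (Submodule.sub_mem _ hv₀K hsK),
            mul_zero]
        have hnorm : ‖v₀ + m • b i - t‖ ^ 2
            = ‖v₀ - s‖ ^ 2 + ((m : ℝ) - r) ^ 2 * ‖g‖ ^ 2 := by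
          rw [heq, norm_add_sq_real, hinner, norm_smul, Real.norm_eq_abs, mul_pow, sq_abs]
          ring
        have hc2 : ((m : ℝ) - r) ^ 2 ≤ 1 / 4 := by
          have h1 : |r - (m : ℝ)| ≤ 1 / 2 := abs_sub_round r
          have h2 : |r - (m : ℝ)| ^ 2 ≤ (1 / 2 : ℝ) ^ 2 := by
            apply pow_le_pow_left₀ (abs_nonneg _) h1
          rw [sq_abs] at h2
          nlinarith
        have hins : (Finset.univ.filter fun j : Fin n => (j : ℕ) < k + 1)
            = insert i (Finset.univ.filter fun j : Fin n => (j : ℕ) < k) := by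
          have hik : (i : ℕ) = k := rfl
          ext j
          simp only [Finset.mem_insert, Finset.mem_filter, Finset.mem_univ, true_and,
            Fin.ext_iff, hik]
          omega
        have hnotmem : i ∉ (Finset.univ.filter fun j : Fin n => (j : ℕ) < k) := by
          simp only [Finset.mem_filter, Finset.mem_univ, true_and]
          exact lt_irrefl k
        rw [hnorm, hins, Finset.sum_insert hnotmem]
        have hg2 : ((m : ℝ) - r) ^ 2 * ‖g‖ ^ 2 ≤ (1 / 4) * ‖g‖ ^ 2 :=
          mul_le_mul_of_nonneg_right hc2 (sq_nonneg _)
        rw [← hgdef]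
        linarith

/-- Let (b₁, …, b_n) be a ℤ-basis of a lattice Λ with Gram–Schmidt
orthogonalization (b₁*, …, b_n*). Then every t ∈ span(Λ) admits v ∈ Λ with
‖v − t‖² ≤ (1/4)·Σ ‖b_i*‖²; moreover for the complete filtration
Λ_i = ℤb₁ + ⋯ + ℤb_i each rank-one quotient Λ_i/Λ_{i−1} has covering radius
(1/2)‖b_i*‖, which is half its covolume (the covolume of a rank-one lattice
ℤ·g being ‖g‖). -/
theorem babai_nearest_plane_bound
    {E : Type*} [NormedAddCommGroup E] [InnerProductSpace ℝ E] [FiniteDimensional ℝ E]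
    (n : ℕ) (L : Submodule ℤ E) (b : Fin n → E)
    (hb : LinearIndependent ℝ b) (hbL : L = Submodule.span ℤ (Set.range b)) :
    (∀ t ∈ latSpan L, ∃ v ∈ L,
        ‖v - t‖ ^ 2 ≤ (1 / 4 : ℝ) * ∑ i, ‖InnerProductSpace.gramSchmidt ℝ b i‖ ^ 2) ∧
    (∀ i : Fin n,
        covRad (quotLat (chainOf b ((i : ℕ) + 1)) (chainOf b (i : ℕ)))
          = (1 / 2 : ℝ) * ‖InnerProductSpace.gramSchmidt ℝ b i‖ ∧
        ∀ g : E, quotLat (chainOf b ((i : ℕ) + 1)) (chainOf b (i : ℕ))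
              = Submodule.span ℤ {g} →
          covRad (quotLat (chainOf b ((i : ℕ) + 1)) (chainOf b (i : ℕ)))
            = (1 / 2 : ℝ) * ‖g‖) := by
  constructor
  · intro t ht
    have hrange : Set.range b = b '' {j : Fin n | (j : ℕ) < n} := by
      rw [show {j : Fin n | (j : ℕ) < n} = Set.univ from
        Set.eq_univ_of_forall fun j => j.isLt, Set.image_univ]
    have hspan : latSpan L = Submodule.span ℝ (Set.range b) := by
      rw [hbL]; exact latSpan_span' _
    have ht' : t ∈ Submodule.span ℝ (b '' {j : Fin n | (j : ℕ) < n}) := by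
      rw [← hrange, ← hspan]; exact ht
    obtain ⟨v, hv, hbd⟩ := babai_aux b n t ht'
    refine ⟨v, ?_, ?_⟩
    · rw [hbL, hrange]; exact hv
    · have hfil : (Finset.univ.filter fun j : Fin n => (j : ℕ) < n) = Finset.univ :=
        Finset.filter_true_of_mem fun j _ => j.isLt
      rwa [hfil] at hbd
  · intro i
    have hq := quotLat_chain b i
    have hne : gramSchmidt ℝ b i ≠ 0 := gramSchmidt_ne_zero i hb
    refine ⟨by rw [hq, covRad_span_singleton hne], ?_⟩
    intro g hg
    rw [hq, covRad_span_singleton hne,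
      norm_eq_of_span_eq hne (hg.symm.trans hq)]

end
end

section
/- Let Λ be a lattice of rank n, let Λ' ⊆ Λ be a pure sublattice of rank i, and let π be the orthogonal projection of E onto the orthogonal complement of span(Λ'). Then for every 1 ≤ j ≤ n − i, the j-th successive minimum of the quotient lattice satisfies λ_j(π(Λ)) ≤ λ_n(Λ). -/
open scoped RealInnerProductSpace
open Metric

noncomputable section

variable {E : Type*} [NormedAddCommGroup E] [InnerProductSpace ℝ E] [FiniteDimensional ℝ E]

/-- The `i`-th successive minimum of a set `S`: the infimum of `r > 0` such
that `S` contains `i` linearly independent vectors of norm at most `r`. -/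
def succMin (S : Set E) (i : ℕ) : ℝ :=
  sInf {r : ℝ | 0 < r ∧ ∃ v : Fin i → E,
    (∀ j, v j ∈ S) ∧ LinearIndependent ℝ v ∧ ∀ j, ‖v j‖ ≤ r}

/-- `x` belongs to the dual lattice of `L`. -/
def MemDual (L : Submodule ℤ E) (x : E) : Prop :=
  ∀ v ∈ L, ∃ m : ℤ, ⟪x, v⟫ = (m : ℝ)

/-- The dual lattice of `L`, as a set. -/
def dualSet (L : Submodule ℤ E) : Set E := {x | MemDual L x}

/-- The covolume of the lattice generated by `b`, as the square root of the
Gram determinant of `b`. -/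
def gramVol {k : ℕ} (b : Fin k → E) : ℝ :=
  Real.sqrt (Matrix.det (Matrix.of fun i j => ⟪b i, b j⟫))

/-- Let Λ be a lattice of rank n, Λ' ⊆ Λ a pure sublattice of
rank i, and π the orthogonal projection onto the orthogonal complement of
span(Λ'). Then for every 1 ≤ j ≤ n − i, λ_j(π(Λ)) ≤ λ_n(Λ). -/
theorem succMin_quotient_le
    {E : Type*} [NormedAddCommGroup E] [InnerProductSpace ℝ E] [FiniteDimensional ℝ E]
    (n i : ℕ) (L L' : Submodule ℤ E)
    (hL : IsLatticeOfRank L n) (hL' : IsLatticeOfRank L' i)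
    (hpure : IsPureIn L' L)
    (j : ℕ) (hj1 : 1 ≤ j) (hj2 : j ≤ n - i) :
    succMin ((quotLat L L' : Submodule ℤ E) : Set E) j ≤ succMin (L : Set E) n := by
  obtain ⟨b, hb_li, hb_span⟩ := hL
  obtain ⟨b', hb'_li, hb'_span⟩ := hL'
  set K : Submodule ℝ E := latSpan L' with hK
  set f : E →ₗ[ℝ] E := Kᗮ.subtype.comp (Submodule.orthogonalProjectionOnto Kᗮ).toLinearMap with hf
  have hproj : ∀ x : E, (projPerp L') x = f x := fun x => rfl
  have hker : LinearMap.ker f ≤ K := by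
    intro x hx
    have : (Submodule.orthogonalProjectionOnto Kᗮ x : E) = 0 := hx
    have h2 : Submodule.orthogonalProjectionOnto Kᗮ x = 0 := by
      exact Subtype.ext this
    rw [Submodule.orthogonalProjectionOnto_eq_zero_iff] at h2
    rwa [Submodule.orthogonal_orthogonal] at h2
  have hKfin : Module.finrank ℝ (LinearMap.ker f) ≤ i := by
    refine le_trans (Submodule.finrank_mono hker) ?_
    rw [hK, latSpan, hb'_span, Submodule.span_span_of_tower]
    simpa [Set.finrank] using finrank_range_le_card b'
  have hnorm : ∀ x : E, ‖f x‖ ≤ ‖x‖ := by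
    intro x
    have h1 : ‖f x‖ = ‖Submodule.orthogonalProjectionOnto Kᗮ x‖ := rfl
    rw [h1]
    calc ‖Submodule.orthogonalProjectionOnto Kᗮ x‖ ≤ ‖Submodule.orthogonalProjectionOnto Kᗮ‖ * ‖x‖ :=
          (Submodule.orthogonalProjectionOnto Kᗮ).le_opNorm x
      _ ≤ 1 * ‖x‖ := by
          exact mul_le_mul_of_nonneg_right (Submodule.orthogonalProjectionOnto_norm_le _) (norm_nonneg x)
      _ = ‖x‖ := one_mul _
  apply csInf_le_csInf
  · exact ⟨0, fun r hr => le_of_lt hr.1⟩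
  · obtain ⟨M, hM⟩ := Finite.exists_le fun k : Fin n => ‖b k‖
    refine ⟨max M 1, lt_of_lt_of_le one_pos (le_max_right _ _), b, ?_, hb_li, ?_⟩
    · intro k
      rw [hb_span]
      exact Submodule.subset_span (Set.mem_range_self k)
    · exact fun k => (hM k).trans (le_max_left _ _)
  · rintro r ⟨hr, v, hvL, hvli, hvnorm⟩
    refine ⟨hr, ?_⟩
    set p : Submodule ℝ E := Submodule.span ℝ (Set.range v) with hp
    have hpn : Module.finrank ℝ p = n := by
      rw [hp, finrank_span_eq_card hvli, Fintype.card_fin]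
    have hrn := LinearMap.finrank_range_add_finrank_ker (f.domRestrict p)
    rw [LinearMap.range_domRestrict, hpn] at hrn
    have hkr : Module.finrank ℝ (LinearMap.ker (f.domRestrict p)) ≤ i := by
      rw [LinearMap.ker_domRestrict]
      have he : Submodule.comap p.subtype (LinearMap.ker f)
          = Submodule.comap p.subtype (LinearMap.ker f ⊓ p) := by
        ext x
        simp [x.2]
      rw [he,
        (Submodule.comapSubtypeEquivOfLe (inf_le_right : LinearMap.ker f ⊓ p ≤ p)).finrank_eq]
      exact (Submodule.finrank_mono inf_le_left).trans hKfin
    have hmapfin : j ≤ Module.finrank ℝ (p.map f) := by omega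
    have hmapeq : p.map f = Submodule.span ℝ (Set.range (f ∘ v)) := by
      rw [Set.range_comp, Submodule.span_image]
    obtain ⟨s, hs_sub, hs_span, hs_li⟩ := exists_linearIndependent ℝ (Set.range (f ∘ v))
    have hs_fin : s.Finite := (Set.finite_range _).subset hs_sub
    haveI : Fintype s := hs_fin.fintype
    have hcard : j ≤ Fintype.card s := by
      have : Module.finrank ℝ (Submodule.span ℝ s) = Fintype.card s := by
        rw [finrank_span_set_eq_card hs_li, Set.toFinset_card]
      rw [hs_span, ← hmapeq] at this
      omega
    obtain ⟨g⟩ : Nonempty (Fin j ↪ s) :=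
      Function.Embedding.nonempty_of_card_le (by rwa [Fintype.card_fin])
    refine ⟨fun k => (g k : E), ?_, hs_li.comp g g.injective, ?_⟩
    · intro k
      obtain ⟨m, hm⟩ := hs_sub (g k).2
      refine ⟨v m, hvL m, ?_⟩
      rw [hproj]
      exact hm
    · intro k
      obtain ⟨m, hm⟩ := hs_sub (g k).2
      calc ‖(g k : E)‖ = ‖f (v m)‖ := by rw [← hm]; rfl
        _ ≤ ‖v m‖ := hnorm _
        _ ≤ r := hvnorm m


end
end

section
/- For every lattice Λ of rank n there exists a complete filtration {0} = Λ₀ ⊂ Λ₁ ⊂ ⋯ ⊂ Λ_n = Λ by pure sublattices with rk(Λ_i) = i and covol(Λ_i/Λ_{i−1}) ≤ √n·λ_n(Λ) for all 1 ≤ i ≤ n. Consequently, for every t ∈ span(Λ) there exists c ∈ Λ with ‖c − t‖ ≤ (n/2)·λ_n(Λ). -/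
open scoped RealInnerProductSpace
open Metric

noncomputable section

variable {E : Type*} [NormedAddCommGroup E] [InnerProductSpace ℝ E] [FiniteDimensional ℝ E]

namespace GF


open Submodule

variable {E : Type*} [NormedAddCommGroup E] [InnerProductSpace ℝ E] [FiniteDimensional ℝ E]

lemma le_span_real (s : Set E) :
    Submodule.span ℤ s ≤ (Submodule.span ℝ s).restrictScalars ℤ :=
  Submodule.span_le.2 Submodule.subset_span

lemma discrete_of_li {n : ℕ} {b : Fin n → E} (hb : LinearIndependent ℝ b) :
    DiscreteTopology (Submodule.span ℤ (Set.range b)) := by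
  set F := Submodule.span ℝ (Set.range b) with hF
  set bF : Fin n → F := fun j => ⟨b j, Submodule.subset_span ⟨j, rfl⟩⟩ with hbFdef
  have hcomp : F.subtype ∘ bF = b := rfl
  have hbF : LinearIndependent ℝ bF := LinearIndependent.of_comp F.subtype (by rwa [hcomp])
  have hinj := Submodule.injective_subtype F
  have htop : Submodule.span ℝ (Set.range bF) = ⊤ := by
    apply Submodule.map_injective_of_injective hinj
    rw [Submodule.map_span, ← Set.range_comp, hcomp, Submodule.map_top, Submodule.range_subtype]
  let basis : Module.Basis (Fin n) ℝ F := Module.Basis.mk hbF (le_of_eq htop.symm)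
  have hbcoe : ⇑basis = bF := Module.Basis.coe_mk _ _
  have hdisc : DiscreteTopology (Submodule.span ℤ (Set.range bF)) := by
    have h := (inferInstance : DiscreteTopology (Submodule.span ℤ (Set.range ⇑basis)))
    rwa [hbcoe] at h
  have hcm : (Submodule.span ℤ (Set.range b)).comap ((F.subtype).restrictScalars ℤ)
      = Submodule.span ℤ (Set.range bF) := by
    have hmap : Submodule.map ((F.subtype).restrictScalars ℤ) (Submodule.span ℤ (Set.range bF))
        = Submodule.span ℤ (Set.range b) := by
      rw [Submodule.map_span, ← Set.range_comp]
      rfl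
    rw [← hmap]
    exact Submodule.comap_map_eq_of_injective (f := (F.subtype).restrictScalars ℤ) (fun a c h => hinj h) _
  have hmemF : ∀ x : E, x ∈ Submodule.span ℤ (Set.range b) → x ∈ F :=
    fun x hx => le_span_real _ hx
  refine DiscreteTopology.of_continuous_injective
    (f := fun x : (Submodule.span ℤ (Set.range b)) =>
      (⟨⟨x.1, hmemF x.1 x.2⟩, by rw [← hcm]; exact Submodule.mem_comap.2 x.2⟩ :
        (Submodule.span ℤ (Set.range bF)))) ?_ ?_
  · exact Continuous.subtype_mk (Continuous.subtype_mk continuous_subtype_val _) _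
  · intro a c h
    apply Subtype.ext
    have h1 := congrArg Subtype.val h
    have h2 := congrArg Subtype.val h1
    exact h2

lemma finite_bounded {n : ℕ} {b : Fin n → E} (hb : LinearIndependent ℝ b) (r : ℝ) :
    {x : E | x ∈ Submodule.span ℤ (Set.range b) ∧ ‖x‖ ≤ r}.Finite := by
  have hd : DiscreteTopology (Submodule.span ℤ (Set.range b)) := discrete_of_li hb
  have hd' : DiscreteTopology ((Submodule.span ℤ (Set.range b)).toAddSubgroup) := hd
  have hc : IsClosed (((Submodule.span ℤ (Set.range b)).toAddSubgroup : AddSubgroup E) : Set E) :=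
    AddSubgroup.isClosed_of_discrete
  have hfin := Metric.finite_isBounded_inter_isClosed DiscreteTopology.isDiscrete
    (Metric.isBounded_closedBall (x := (0:E)) (r := r)) hc
  apply hfin.subset
  intro x hx
  exact ⟨Metric.mem_closedBall.2 (by simpa [dist_eq_norm] using hx.2), hx.1⟩


lemma succMin_nonneg (S : Set E) (i : ℕ) : 0 ≤ succMin S i :=
  Real.sInf_nonneg (fun _ hr => hr.1.le)

lemma exists_succMin_vectors {n : ℕ} {b : Fin n → E} (hb : LinearIndependent ℝ b) :
    ∃ w : Fin n → E, (∀ j, w j ∈ Submodule.span ℤ (Set.range b)) ∧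
      LinearIndependent ℝ w ∧
      ∀ j, ‖w j‖ ≤ succMin ((Submodule.span ℤ (Set.range b) : Submodule ℤ E) : Set E) n := by
  rcases Nat.eq_zero_or_pos n with hn | hn
  · subst hn
    exact ⟨Fin.elim0, fun j => j.elim0, linearIndependent_empty_type, fun j => j.elim0⟩
  have : Nonempty (Fin n) := ⟨⟨0, hn⟩⟩
  set L := Submodule.span ℤ (Set.range b) with hL
  set R := {r : ℝ | 0 < r ∧ ∃ v : Fin n → E,
    (∀ j, v j ∈ (L : Set E)) ∧ LinearIndependent ℝ v ∧ ∀ j, ‖v j‖ ≤ r} with hR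
  have hsInf : succMin ((L : Submodule ℤ E) : Set E) n = sInf R := rfl
  set lam := succMin ((L : Submodule ℤ E) : Set E) n with hlam
  have hRne : R.Nonempty := by
    refine ⟨(∑ j, ‖b j‖) + 1, ?_, b, fun j => Submodule.subset_span ⟨j, rfl⟩, hb, fun j => ?_⟩
    · positivity
    · have h1 : ‖b j‖ ≤ ∑ j, ‖b j‖ :=
        Finset.single_le_sum (fun i _ => norm_nonneg (b i)) (Finset.mem_univ j)
      linarith
  have hRbdd : BddBelow R := ⟨0, fun r hr => hr.1.le⟩
  have hlam0 : 0 ≤ lam := succMin_nonneg _ _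
  have hT : {x : E | x ∈ L ∧ ‖x‖ ≤ lam + 1}.Finite := finite_bounded hb (lam + 1)
  set V : Set (Fin n → E) := {v | (∀ j, v j ∈ L ∧ ‖v j‖ ≤ lam + 1) ∧ LinearIndependent ℝ v}
    with hV
  have hVfin : V.Finite := by
    apply Set.Finite.subset (Set.Finite.pi (fun _ : Fin n => hT))
    intro v hv
    exact Set.mem_pi.2 (fun j _ => hv.1 j)
  have hVne : V.Nonempty := by
    obtain ⟨r, hrR, hrlt⟩ := exists_lt_of_csInf_lt hRne
      (show sInf R < lam + 1 by rw [← hsInf]; exact lt_add_one lam)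
    obtain ⟨hr0, v, hvL, hvLI, hvnorm⟩ := hrR
    exact ⟨v, fun j => ⟨hvL j, (hvnorm j).trans hrlt.le⟩, hvLI⟩
  classical
  set f : (Fin n → E) → ℝ := fun v => Finset.univ.sup' Finset.univ_nonempty fun j => ‖v j‖
    with hf
  obtain ⟨v₀, hv₀mem, hv₀min⟩ := Finset.exists_min_image hVfin.toFinset f
    (by rwa [Set.Finite.toFinset_nonempty])
  rw [Set.Finite.mem_toFinset] at hv₀mem
  have hfle : f v₀ ≤ lam := by
    by_contra hcon
    push_neg at hcon
    obtain ⟨r, hrR, hrlt⟩ := exists_lt_of_csInf_lt hRne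
      (show sInf R < min (f v₀) (lam + 1) by
        rw [← hsInf]; exact lt_min hcon (lt_add_one lam))
    obtain ⟨hr0, v, hvL, hvLI, hvnorm⟩ := hrR
    have hrlt1 := lt_of_lt_of_le hrlt (min_le_left _ _)
    have hrlt2 := lt_of_lt_of_le hrlt (min_le_right _ _)
    have hvV : v ∈ V := ⟨fun j => ⟨hvL j, (hvnorm j).trans hrlt2.le⟩, hvLI⟩
    have h1 : f v₀ ≤ f v := hv₀min v (Set.Finite.mem_toFinset _ |>.2 hvV)
    have h2 : f v ≤ r := Finset.sup'_le _ _ (fun j _ => hvnorm j)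
    linarith
  refine ⟨v₀, fun j => (hv₀mem.1 j).1, hv₀mem.2, fun j => ?_⟩
  exact le_trans (Finset.le_sup' (f := fun j => ‖v₀ j‖) (Finset.mem_univ j)) hfle


end GF


/-- Every lattice Λ of rank n admits a complete filtration
{0} = Λ₀ ⊂ Λ₁ ⊂ ⋯ ⊂ Λ_n = Λ by pure sublattices with rk(Λ_i) = i and
covol(Λ_i/Λ_{i−1}) ≤ √n·λ_n(Λ) (each rank-one quotient being generated by a
vector of norm at most √n·λ_n(Λ)); consequently every t ∈ span(Λ) admits
c ∈ Λ with ‖c − t‖ ≤ (n/2)·λ_n(Λ). -/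
theorem exists_good_filtration_and_close_vector
    {E : Type*} [NormedAddCommGroup E] [InnerProductSpace ℝ E] [FiniteDimensional ℝ E]
    (n : ℕ) (L : Submodule ℤ E) (hL : IsLatticeOfRank L n) :
    (∃ Lc : ℕ → Submodule ℤ E,
      Lc 0 = ⊥ ∧ Lc n = L ∧
      (∀ i < n, Lc i < Lc (i + 1)) ∧
      (∀ i ≤ n, IsLatticeOfRank (Lc i) i) ∧
      (∀ i ≤ n, IsPureIn (Lc i) L) ∧
      (∀ i < n, ∀ g : E,
        quotLat (Lc (i + 1)) (Lc i) = Submodule.span ℤ {g} →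
        ‖g‖ ≤ Real.sqrt n * succMin (L : Set E) n)) ∧
    (∀ t ∈ latSpan L, ∃ c ∈ L,
      ‖c - t‖ ≤ (n : ℝ) / 2 * succMin (L : Set E) n) := by
  classical
  obtain ⟨b, hb, rfl⟩ := hL
  obtain ⟨w, hwL, hwli, hwnorm⟩ := GF.exists_succMin_vectors hb
  set L' : Submodule ℤ E := Submodule.span ℤ (Set.range b) with hL'
  set lam : ℝ := succMin ((L' : Submodule ℤ E) : Set E) n with hlam
  have hlam0 : 0 ≤ lam := GF.succMin_nonneg _ _
  set S : ℕ → Set E := fun i => w '' {j : Fin n | (j : ℕ) < i} with hS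
  set W : ℕ → Submodule ℝ E := fun i => Submodule.span ℝ (S i) with hW
  set Lc : ℕ → Submodule ℤ E := fun i => L' ⊓ (W i).restrictScalars ℤ with hLc
  have hmemLc : ∀ (i : ℕ) (x : E), x ∈ Lc i ↔ x ∈ L' ∧ x ∈ W i := by
    intro i x
    simp only [hLc, Submodule.mem_inf, Submodule.restrictScalars_mem]
  have hSiLc : ∀ (i : ℕ) (j : Fin n), (j : ℕ) < i → w j ∈ Lc i := by
    intro i j hj
    exact (hmemLc i (w j)).2 ⟨hwL j, Submodule.subset_span ⟨j, hj, rfl⟩⟩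
  have hWmono : ∀ {i j : ℕ}, i ≤ j → W i ≤ W j := by
    intro i j h
    exact Submodule.span_mono (Set.image_mono (f := w) (fun x hx => lt_of_lt_of_le hx h))
  have hLcmono : ∀ {i j : ℕ}, i ≤ j → Lc i ≤ Lc j := by
    intro i j h x hx
    rw [hmemLc] at hx ⊢
    exact ⟨hx.1, hWmono h hx.2⟩
  have hlatSpan : ∀ i : ℕ, latSpan (Lc i) = W i := by
    intro i
    apply le_antisymm
    · have h1 : latSpan (Lc i) = Submodule.span ℝ ((Lc i : Set E)) := rfl
      rw [h1, Submodule.span_le]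
      intro x hx
      exact ((hmemLc i x).1 hx).2
    · have h2 : W i = Submodule.span ℝ (S i) := rfl
      rw [h2, Submodule.span_le]
      rintro x ⟨j, hj, rfl⟩
      exact Submodule.subset_span (hSiLc i j hj)
  have hfinW : ∀ i ≤ n, Module.finrank ℝ (W i) = i := by
    intro i hi
    have hSi : S i = Set.range (w ∘ Fin.castLE hi) := by
      ext x
      constructor
      · rintro ⟨j, hj, rfl⟩
        exact ⟨⟨(j : ℕ), hj⟩, rfl⟩
      · rintro ⟨j, rfl⟩
        exact ⟨Fin.castLE hi j, j.isLt, rfl⟩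
    have h3 : W i = Submodule.span ℝ (Set.range (w ∘ Fin.castLE hi)) := by
      rw [← hSi]
    rw [h3, finrank_span_eq_card (hwli.comp _ (Fin.castLE_injective hi)), Fintype.card_fin]
  have hFn : W n = Submodule.span ℝ (Set.range b) := by
    have hle : W n ≤ Submodule.span ℝ (Set.range b) := by
      have h2 : W n = Submodule.span ℝ (S n) := rfl
      rw [h2, Submodule.span_le]
      rintro x ⟨j, _, rfl⟩
      exact GF.le_span_real _ (hwL j)
    apply Submodule.eq_of_le_of_finrank_le hle
    rw [finrank_span_eq_card hb, Fintype.card_fin, hfinW n le_rfl]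
  have hLF : L' ≤ (W n).restrictScalars ℤ := by
    rw [hFn, hL']
    exact GF.le_span_real _
  have hLcn : Lc n = L' := by
    simp only [hLc]
    exact inf_eq_left.2 hLF
  have hW0 : W 0 = ⊥ := by
    have h0 : S 0 = ∅ := by
      ext x
      simp [hS]
    have h2 : W 0 = Submodule.span ℝ (S 0) := rfl
    rw [h2, h0, Submodule.span_empty]
  have hLc0 : Lc 0 = ⊥ := by
    rw [eq_bot_iff]
    intro x hx
    have h1 := ((hmemLc 0 x).1 hx).2
    rw [hW0, Submodule.mem_bot] at h1
    simpa using h1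
  have hwnot : ∀ (i : ℕ) (hi : i < n), w ⟨i, hi⟩ ∉ W i := by
    intro i hi
    exact hwli.notMem_span_image (by simp)
  have hstrict : ∀ i < n, Lc i < Lc (i + 1) := by
    intro i hi
    rw [SetLike.lt_iff_le_and_exists]
    refine ⟨hLcmono (Nat.le_succ i), w ⟨i, hi⟩, hSiLc (i+1) ⟨i, hi⟩ (Nat.lt_succ_self i), ?_⟩
    intro hmem
    exact hwnot i hi ((hmemLc _ _ |>.1 hmem).2)
  have hpure : ∀ i : ℕ, IsPureIn (Lc i) L' := by
    intro i
    refine ⟨inf_le_left, fun v hv m hm hmv => ?_⟩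
    refine (hmemLc _ _).2 ⟨hv, ?_⟩
    have h2 := ((hmemLc _ _).1 hmv).2
    have h3 : ((m : ℝ)) • v ∈ W i := by
      rw [Int.cast_smul_eq_zsmul]
      exact h2
    have h4 := Submodule.smul_mem (W i) ((m : ℝ))⁻¹ h3
    rwa [inv_smul_smul₀ (by exact_mod_cast hm)] at h4
  constructor
  · refine ⟨Lc, hLc0, hLcn, hstrict, ?_, fun i _ => hpure i, ?_⟩
    · -- rank
      intro i hi
      set V : Submodule ℝ E := W i with hV
      have hfinV : Module.finrank ℝ V = i := hfinW i hi
      set M : Submodule ℤ V := (Lc i).comap ((V.subtype).restrictScalars ℤ) with hM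
      have hMmap : Submodule.map ((V.subtype).restrictScalars ℤ) M = Lc i := by
        ext x
        constructor
        · rintro ⟨y, hy, rfl⟩
          exact hy
        · intro hx
          exact ⟨⟨x, ((hmemLc i x).1 hx).2⟩, hx, rfl⟩
      haveI hdM : DiscreteTopology M := by
        haveI hdL : DiscreteTopology L' := GF.discrete_of_li hb
        refine DiscreteTopology.of_continuous_injective
          (f := fun x : M => (⟨(x.1 : E), ((hmemLc i _).1 x.2).1⟩ : L')) ?_ ?_
        · exact Continuous.subtype_mk (continuous_subtype_val.comp continuous_subtype_val) _
        · intro a c h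
          have h1 := congrArg Subtype.val h
          exact Subtype.ext (Subtype.ext h1)
      haveI hzM : IsZLattice ℝ M := by
        refine ⟨?_⟩
        apply Submodule.map_injective_of_injective (Submodule.injective_subtype V)
        rw [Submodule.map_span, Submodule.map_top, Submodule.range_subtype]
        have himg : V.subtype '' (M : Set V) = (Lc i : Set E) := by
          ext x
          constructor
          · rintro ⟨y, hy, rfl⟩
            exact hy
          · intro hx
            exact ⟨⟨x, ((hmemLc i x).1 hx).2⟩, hx, rfl⟩
        rw [himg]
        exact hlatSpan i
      haveI : Module.Finite ℤ M := ZLattice.module_finite ℝ M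
      haveI : Module.Free ℤ M := ZLattice.module_free ℝ M
      have hcard : Fintype.card (Module.Free.ChooseBasisIndex ℤ M) = i := by
        rw [← Module.finrank_eq_card_chooseBasisIndex, ZLattice.rank ℝ M, hfinV]
      set c₁ := (Module.Free.chooseBasis ℤ M).reindex (Fintype.equivFinOfCardEq hcard) with hc₁
      set bV := c₁.ofZLatticeBasis ℝ M with hbV
      refine ⟨fun j => ((bV j : V) : E), ?_, ?_⟩
      · exact bV.linearIndependent.map' V.subtype (Submodule.ker_subtype V)
      · have hspan : Submodule.span ℤ (Set.range ⇑bV) = M :=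
          Module.Basis.ofZLatticeBasis_span ℝ M (b := c₁)
        have hrange : Set.range (fun j => ((bV j : V) : E))
            = ⇑((V.subtype).restrictScalars ℤ) '' Set.range ⇑bV := by
          rw [← Set.range_comp]
          rfl
        rw [hrange, ← Submodule.map_span, hspan, hMmap]
    · -- generator bound
      intro i hi g hg
      have hx1 : w ⟨i, hi⟩ ∈ Lc (i + 1) := hSiLc (i+1) ⟨i, hi⟩ (Nat.lt_succ_self i)
      have hp_mem : projPerp (Lc i) (w ⟨i, hi⟩) ∈ quotLat (Lc (i + 1)) (Lc i) :=
        Submodule.mem_map_of_mem hx1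
      rw [hg, Submodule.mem_span_singleton] at hp_mem
      obtain ⟨m, hm⟩ := hp_mem
      have hproj : projPerp (Lc i) (w ⟨i, hi⟩)
          = ((Submodule.orthogonalProjectionOnto (latSpan (Lc i))ᗮ (w ⟨i, hi⟩) : (latSpan (Lc i))ᗮ) : E) := rfl
      have hpne : projPerp (Lc i) (w ⟨i, hi⟩) ≠ 0 := by
        rw [hproj]
        intro h0
        have h1 : Submodule.orthogonalProjectionOnto (latSpan (Lc i))ᗮ (w ⟨i, hi⟩) = 0 := by
          exact_mod_cast h0
        have h2 := Submodule.orthogonalProjectionOnto_eq_zero_iff.1 h1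
        rw [Submodule.orthogonal_orthogonal, hlatSpan i] at h2
        exact hwnot i hi h2
      have hmne : m ≠ 0 := by
        rintro rfl
        rw [zero_smul] at hm
        exact hpne hm.symm
      have hnormp : ‖projPerp (Lc i) (w ⟨i, hi⟩)‖ ≤ ‖w ⟨i, hi⟩‖ := by
        rw [hproj]
        calc ‖((Submodule.orthogonalProjectionOnto (latSpan (Lc i))ᗮ (w ⟨i, hi⟩) : (latSpan (Lc i))ᗮ) : E)‖
            = ‖Submodule.orthogonalProjectionOnto (latSpan (Lc i))ᗮ (w ⟨i, hi⟩)‖ := rfl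
          _ ≤ 1 * ‖w ⟨i, hi⟩‖ :=
            ContinuousLinearMap.le_of_opNorm_le _ (Submodule.orthogonalProjectionOnto_norm_le _) _
          _ = ‖w ⟨i, hi⟩‖ := one_mul _
      have hgle : ‖g‖ ≤ ‖projPerp (Lc i) (w ⟨i, hi⟩)‖ := by
        rw [← hm, norm_zsmul ℝ]
        have h5 : (1 : ℝ) ≤ ‖(m : ℝ)‖ := by
          rw [Real.norm_eq_abs, ← Int.cast_abs]
          exact_mod_cast Int.one_le_abs hmne
        nlinarith [norm_nonneg g]
      have hsqn : (1 : ℝ) ≤ Real.sqrt n := by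
        rw [show (1 : ℝ) = Real.sqrt 1 from Real.sqrt_one.symm]
        apply Real.sqrt_le_sqrt
        exact_mod_cast Nat.one_le_iff_ne_zero.2 (fun h => by omega)
      calc ‖g‖ ≤ lam := le_trans hgle (le_trans hnormp (hwnorm _))
        _ = 1 * lam := (one_mul lam).symm
        _ ≤ Real.sqrt n * lam := mul_le_mul_of_nonneg_right hsqn hlam0
  · -- covering
    have cover : ∀ i : ℕ, i ≤ n → ∀ t, t ∈ W i →
        ∃ c, c ∈ Lc i ∧ ‖c - t‖ ≤ i * lam / 2 := by
      intro i
      induction i with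
      | zero =>
        intro _ t ht
        rw [hW0, Submodule.mem_bot] at ht
        subst ht
        exact ⟨0, Submodule.zero_mem _, by simp⟩
      | succ i ih =>
        intro hin t ht
        have hi : i < n := hin
        have hii : i ≤ n := hi.le
        set x : E := w ⟨i, hi⟩ with hx
        have hWsucc : W (i + 1) = W i ⊔ Submodule.span ℝ {x} := by
          have hset : {j : Fin n | (j : ℕ) < i + 1}
              = {j : Fin n | (j : ℕ) < i} ∪ {(⟨i, hi⟩ : Fin n)} := by
            ext j
            simp [Nat.lt_succ_iff_lt_or_eq, Fin.ext_iff, or_comm, le_iff_eq_or_lt]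
          have hSsucc : S (i + 1) = S i ∪ {x} := by
            have h2 : S (i+1) = w '' {j : Fin n | (j : ℕ) < i + 1} := rfl
            rw [h2, hset, Set.image_union, Set.image_singleton]
          have h3 : W (i+1) = Submodule.span ℝ (S (i+1)) := rfl
          rw [h3, hSsucc, Submodule.span_union]
        rw [hWsucc] at ht
        obtain ⟨u, hu, z, hz, rfl⟩ := Submodule.mem_sup.1 ht
        obtain ⟨s, rfl⟩ := Submodule.mem_span_singleton.1 hz
        set m : ℤ := round s with hmdef
        set q : E := (Submodule.orthogonalProjectionOnto (W i) x : E) with hq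
        set p : E := (Submodule.orthogonalProjectionOnto (W i)ᗮ x : E) with hp
        have hxqp : x = q + p :=
          (Submodule.starProjection_add_starProjection_orthogonal (K := W i) x).symm
        have hqW : q ∈ W i := (Submodule.orthogonalProjectionOnto (W i) x).2
        have hpnorm : ‖p‖ ≤ ‖x‖ := by
          calc ‖p‖ = ‖Submodule.orthogonalProjectionOnto (W i)ᗮ x‖ := rfl
            _ ≤ 1 * ‖x‖ :=
              ContinuousLinearMap.le_of_opNorm_le _ (Submodule.orthogonalProjectionOnto_norm_le _) _
            _ = ‖x‖ := one_mul _
        obtain ⟨c', hc'mem, hc'⟩ := ih hii (u + (s - (m : ℝ)) • q)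
          (Submodule.add_mem _ hu (Submodule.smul_mem _ _ hqW))
        refine ⟨c' + m • x, ?_, ?_⟩
        · exact Submodule.add_mem _ (hLcmono (Nat.le_succ i) hc'mem)
            (Submodule.smul_mem _ m (hSiLc (i+1) ⟨i, hi⟩ (Nat.lt_succ_self i)))
        · have hrewrite : c' + m • x - (u + s • x)
              = (c' - (u + (s - (m : ℝ)) • q)) + (((m : ℝ) - s) • p) := by
            rw [← Int.cast_smul_eq_zsmul ℝ m x, hxqp]
            module
          rw [hrewrite]
          have hB : ‖((m : ℝ) - s) • p‖ ≤ lam / 2 := by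
            rw [norm_smul, Real.norm_eq_abs]
            have h1 : |(m : ℝ) - s| ≤ 1 / 2 := by
              rw [abs_sub_comm]
              exact abs_sub_round s
            have h2 : ‖p‖ ≤ lam := le_trans hpnorm (hwnorm _)
            nlinarith [norm_nonneg p, abs_nonneg ((m : ℝ) - s)]
          calc ‖(c' - (u + (s - (m : ℝ)) • q)) + (((m : ℝ) - s) • p)‖
              ≤ ‖c' - (u + (s - (m : ℝ)) • q)‖ + ‖((m : ℝ) - s) • p‖ := norm_add_le _ _
            _ ≤ i * lam / 2 + lam / 2 := add_le_add hc' hB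
            _ = (i + 1 : ℕ) * lam / 2 := by push_cast; ring
    intro t ht
    have htW : t ∈ W n := by
      rw [hFn]
      have h1 : latSpan L' = Submodule.span ℝ (Set.range b) := by
        rw [hL']
        have h2 : latSpan (Submodule.span ℤ (Set.range b))
            = Submodule.span ℝ ((Submodule.span ℤ (Set.range b) : Set E)) := rfl
        rw [h2, Submodule.span_span_of_tower]
      rwa [h1] at ht
    obtain ⟨c, hcmem, hc⟩ := cover n le_rfl t htW
    refine ⟨c, by rw [← hLcn]; exact hcmem, ?_⟩
    calc ‖c - t‖ ≤ n * lam / 2 := hc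
      _ = (n : ℝ) / 2 * lam := by ring


end
end
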